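/- arXiv:1610.08219 — 3 statements merged into one kernel-verified Lean document; each statement's English description precedes it below -/
import Mathlib

section
/- For a symmetric probability measure μ_N on X^N with reference product measure μ₀^{⊗N}, the mean entropy is monotone under taking marginals: (1/N) D(μ_N, μ₀^{⊗N}) ≥ (1/j) D((μ_N)_j, μ₀^{⊗j}) for j ≤ N, where (μ_N)_j denotes the j-th marginal of μ_N on X^j. -/
open MeasureTheory

open Finset ENNReal


theorem finner_aux {ι α κ : Type*} [Fintype ι] [DecidableEq ι] [MeasurableSpace α]
    (μ₀ : Measure α) [IsProbabilityMeasure μ₀] (S : Finset κ)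
    (A : κ → Finset ι) {p : κ → ℝ} (hp0 : ∀ s ∈ S, 0 ≤ p s)
    (hcov : ∀ i : ι, ∑ s ∈ S.filter (fun s => i ∈ A s), p s = 1)
    (T : Finset ι) :
    ∀ (f : κ → (ι → α) → ℝ≥0∞), (∀ s, Measurable (f s)) →
      (∀ s ∈ S, ∀ (x : ι → α) (i : ι) (y : α), i ∉ A s →
        f s (Function.update x i y) = f s x) →
      ∀ x, (∫⋯∫⁻_T, (fun z => ∏ s ∈ S, f s z ^ p s) ∂(fun _ => μ₀)) x
        ≤ ∏ s ∈ S, ((∫⋯∫⁻_T, f s ∂(fun _ => μ₀)) x) ^ p s := by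
  classical
  induction T using Finset.induction with
  | empty => intro f hm hdep x; simp
  | @insert i T hiT ih =>
    intro f hm hdep x
    set G : κ → (ι → α) → ℝ≥0∞ :=
      fun s => if i ∈ A s then (fun z => ∫⁻ y, f s (Function.update z i y) ∂μ₀) else f s with hG
    have hGm : ∀ s, Measurable (G s) := by
      intro s
      by_cases h : i ∈ A s
      · simp only [hG, if_pos h]
        have : (fun z => ∫⁻ y, f s (Function.update z i y) ∂μ₀)
            = ∫⋯∫⁻_{i}, f s ∂(fun _ => μ₀) := by
          rw [lmarginal_singleton]
        rw [this]
        exact (hm s).lmarginal _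
      · simpa only [hG, if_neg h] using hm s
    have hGdep : ∀ s ∈ S, ∀ (x : ι → α) (i' : ι) (y : α), i' ∉ A s →
        G s (Function.update x i' y) = G s x := by
      intro s hs x i' y hi'
      by_cases h : i ∈ A s
      · have hne : i' ≠ i := fun he => hi' (he ▸ h)
        simp only [hG, if_pos h]
        refine lintegral_congr fun z => ?_
        rw [Function.update_comm hne]
        exact hdep s hs _ _ _ hi'
      · simp only [hG, if_neg h]
        exact hdep s hs _ _ _ hi'
    have hGeq : ∀ s ∈ S, (fun z => ∫⁻ y, f s (Function.update z i y) ∂μ₀) = G s := by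
      intro s hs
      by_cases h : i ∈ A s
      · simp only [hG, if_pos h]
      · simp only [hG, if_neg h]
        funext z
        simp [hdep s hs z i _ h]
    have hprodm : Measurable (fun z => ∏ s ∈ S, f s z ^ p s) :=
      Finset.measurable_prod _ fun s _ => (hm s).pow_const _
    have key : ∀ z : ι → α,
        (∫⁻ y, (fun w => ∏ s ∈ S, f s w ^ p s) (Function.update z i y) ∂μ₀)
          ≤ ∏ s ∈ S, G s z ^ p s := by
      intro z
      have hsplit : ∀ y : α, ∏ s ∈ S, f s (Function.update z i y) ^ p s
          = (∏ s ∈ S.filter (fun s => i ∈ A s), f s (Function.update z i y) ^ p s)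
            * ∏ s ∈ S.filter (fun s => i ∉ A s), f s z ^ p s := by
        intro y
        rw [← Finset.prod_filter_mul_prod_filter_not S (fun s => i ∈ A s)]
        congr 1
        refine Finset.prod_congr rfl fun s hs => ?_
        rw [hdep s (Finset.mem_of_mem_filter s hs) z i y (Finset.mem_filter.mp hs).2]
      calc ∫⁻ y, (fun w => ∏ s ∈ S, f s w ^ p s) (Function.update z i y) ∂μ₀
          = (∫⁻ y, ∏ s ∈ S.filter (fun s => i ∈ A s), f s (Function.update z i y) ^ p s ∂μ₀)
            * ∏ s ∈ S.filter (fun s => i ∉ A s), f s z ^ p s := by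
            simp only [hsplit]
            exact lintegral_mul_const'' _ ((Finset.measurable_prod _ fun s _ =>
              ((hm s).comp (measurable_update _)).pow_const _).aemeasurable)
        _ ≤ (∏ s ∈ S.filter (fun s => i ∈ A s),
              (∫⁻ y, f s (Function.update z i y) ∂μ₀) ^ p s)
            * ∏ s ∈ S.filter (fun s => i ∉ A s), f s z ^ p s := by
            gcongr ?_ * _
            exact ENNReal.lintegral_prod_norm_pow_le _
              (fun s _ => ((hm s).comp (measurable_update _)).aemeasurable)
              (hcov i) (fun s hs => hp0 s (Finset.mem_of_mem_filter s hs))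
        _ = ∏ s ∈ S, G s z ^ p s := by
            rw [← Finset.prod_filter_mul_prod_filter_not S (fun s => i ∈ A s)]
            congr 1
            · refine Finset.prod_congr rfl fun s hs => ?_
              simp only [hG, if_pos (Finset.mem_filter.mp hs).2]
            · refine Finset.prod_congr rfl fun s hs => ?_
              simp only [hG, if_neg (Finset.mem_filter.mp hs).2]
    calc (∫⋯∫⁻_insert i T, (fun z => ∏ s ∈ S, f s z ^ p s) ∂(fun _ => μ₀)) x
        = (∫⋯∫⁻_T, (fun z => ∫⁻ y, (fun w => ∏ s ∈ S, f s w ^ p s)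
            (Function.update z i y) ∂μ₀) ∂(fun _ => μ₀)) x := by
          rw [lmarginal_insert' _ hprodm hiT]
      _ ≤ (∫⋯∫⁻_T, (fun z => ∏ s ∈ S, G s z ^ p s) ∂(fun _ => μ₀)) x :=
          lmarginal_mono (fun z => key z) x
      _ ≤ ∏ s ∈ S, ((∫⋯∫⁻_T, G s ∂(fun _ => μ₀)) x) ^ p s := ih G hGm hGdep x
      _ = ∏ s ∈ S, ((∫⋯∫⁻_insert i T, f s ∂(fun _ => μ₀)) x) ^ p s := by
          refine Finset.prod_congr rfl fun s hs => ?_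
          rw [lmarginal_insert' _ (hm s) hiT, hGeq s hs]

/-- Finner's inequality for a family of functions on a product of copies of a probability
space, each depending only on a window of coordinates, with a fractional cover. -/
theorem finner {ι α κ : Type*} [Fintype ι] [DecidableEq ι] [MeasurableSpace α]
    (μ₀ : Measure α) [IsProbabilityMeasure μ₀] (S : Finset κ)
    (A : κ → Finset ι) {p : κ → ℝ} (hp0 : ∀ s ∈ S, 0 ≤ p s)
    (hcov : ∀ i : ι, ∑ s ∈ S.filter (fun s => i ∈ A s), p s = 1)
    (f : κ → (ι → α) → ℝ≥0∞) (hm : ∀ s, Measurable (f s))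
    (hdep : ∀ s ∈ S, ∀ (x : ι → α) (i : ι) (y : α), i ∉ A s →
        f s (Function.update x i y) = f s x) :
    ∫⁻ x, ∏ s ∈ S, f s x ^ p s ∂(Measure.pi fun _ : ι => μ₀)
      ≤ ∏ s ∈ S, (∫⁻ x, f s x ∂(Measure.pi fun _ : ι => μ₀)) ^ p s := by
  classical
  obtain ⟨x⟩ : Nonempty (ι → α) := by
    rcases isEmpty_or_nonempty ι with hι | hι
    · exact ⟨fun i => (hι.false i).elim⟩
    · rcases isEmpty_or_nonempty α with hα | hα
      · refine absurd (show μ₀ Set.univ = 0 by simp [Set.univ_eq_empty_iff.mpr hα]) ?_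
        simp [measure_univ]
      · exact ⟨fun _ => hα.some⟩
  have h1 := finner_aux μ₀ S A hp0 hcov Finset.univ f hm hdep x
  simp only [lmarginal_univ] at h1
  exact h1

theorem map_proj_pi {X : Type*} [MeasurableSpace X] (μ₀ : Measure X) [IsProbabilityMeasure μ₀]
    {N j : ℕ} (hjN : j ≤ N) :
    (Measure.pi fun _ : Fin N => μ₀).map
        (fun (x : Fin N → X) (i : Fin j) => x (Fin.castLE hjN i))
      = Measure.pi fun _ : Fin j => μ₀ := by
  classical
  have hπm : Measurable (fun (x : Fin N → X) (i : Fin j) => x (Fin.castLE hjN i)) :=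
    measurable_pi_lambda _ fun i => measurable_pi_apply _
  refine (Measure.pi_eq (μ := fun _ : Fin j => μ₀) fun B hB => ?_).symm
  rw [Measure.map_apply hπm (MeasurableSet.univ_pi hB)]
  have hpre : (fun (x : Fin N → X) (i : Fin j) => x (Fin.castLE hjN i)) ⁻¹' (Set.pi Set.univ B)
      = Set.pi Set.univ (fun k : Fin N =>
          if h : (k : ℕ) < j then B ⟨k, h⟩ else Set.univ) := by
    ext x
    simp only [Set.mem_preimage, Set.mem_pi, Set.mem_univ, forall_true_left, true_implies]
    constructor
    · intro hx k
      by_cases h : (k : ℕ) < j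
      · simpa [h] using hx ⟨k, h⟩
      · simp [h]
    · intro hx i
      have := hx (Fin.castLE hjN i)
      simpa [i.2] using this
  rw [hpre, Measure.pi_pi]
  set g : ℕ → ℝ≥0∞ := fun k => if h : k < j then μ₀ (B ⟨k, h⟩) else 1 with hg
  have h1 : ∀ k : Fin N,
      μ₀ (if h : (k : ℕ) < j then B ⟨k, h⟩ else Set.univ) = g (k : ℕ) := by
    intro k
    by_cases h : (k : ℕ) < j <;> simp [hg, h]
  calc ∏ k : Fin N, μ₀ (if h : (k : ℕ) < j then B ⟨k, h⟩ else Set.univ)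
      = ∏ k : Fin N, g (k : ℕ) := Finset.prod_congr rfl fun k _ => h1 k
    _ = ∏ k ∈ Finset.range N, g k := Fin.prod_univ_eq_prod_range _ _
    _ = ∏ k ∈ Finset.range j, g k := by
        refine (Finset.prod_subset (Finset.range_subset_range.mpr hjN) fun k _ hk => ?_).symm
        simp only [Finset.mem_range, not_lt] at hk
        simp [hg, not_lt.mpr hk]
    _ = ∏ i : Fin j, g (i : ℕ) := (Fin.prod_univ_eq_prod_range _ _).symm
    _ = ∏ i : Fin j, μ₀ (B i) := by
        refine Finset.prod_congr rfl fun i _ => ?_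
        simp [hg, i.2]

theorem map_perm_pi {X : Type*} [MeasurableSpace X] (μ₀ : Measure X) [SigmaFinite μ₀] {N : ℕ}
    (σ : Equiv.Perm (Fin N)) :
    (Measure.pi fun _ : Fin N => μ₀).map (fun x => x ∘ σ)
      = Measure.pi fun _ : Fin N => μ₀ := by
  have h := measurePreserving_piCongrLeft (fun _ : Fin N => μ₀) σ.symm
  have hco : ⇑(MeasurableEquiv.piCongrLeft (fun _ : Fin N => X) σ.symm)
      = fun x => x ∘ σ := by
    funext x
    funext k
    show (Equiv.piCongrLeft (fun _ : Fin N => X) σ.symm) x k = x (σ k)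
    conv_lhs => rw [show k = σ.symm (σ k) by simp]
    exact Equiv.piCongrLeft_apply_apply (fun _ : Fin N => X) σ.symm x (σ k)
  have := h.map_eq
  rwa [hco] at this


/-- The relative entropy `D(ν,μ) = ∫ log(dν/dμ) dν`. -/
noncomputable def relEnt {α : Type*} [MeasurableSpace α] (ν μ : Measure α) : ℝ :=
  ∫ x, Real.log (ν.rnDeriv μ x).toReal ∂ν

/-- Monotonicity of the mean entropy under marginals: for a symmetric probability
measure `μN` on `X^N`, `(1/N) D(μN, μ₀^{⊗N}) ≥ (1/j) D((μN)_j, μ₀^{⊗j})` where `(μN)_j`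
is the `j`-th marginal (pushforward under projection to the first `j` coordinates). -/
theorem stmt4 {X : Type*} [MeasurableSpace X] (μ₀ : Measure X) [IsProbabilityMeasure μ₀]
    (N j : ℕ) (hj : 0 < j) (hjN : j ≤ N)
    (μN : Measure (Fin N → X)) [IsProbabilityMeasure μN]
    (hsym : ∀ σ : Equiv.Perm (Fin N), Measure.map (fun x => x ∘ σ) μN = μN)
    (hac : μN ≪ Measure.pi (fun _ : Fin N => μ₀))
    (hintN : Integrable
      (fun x => Real.log ((μN.rnDeriv (Measure.pi (fun _ : Fin N => μ₀))) x).toReal) μN)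
    (hintj : Integrable
      (fun y => Real.log
        (((Measure.map (fun (x : Fin N → X) (i : Fin j) => x (Fin.castLE hjN i)) μN).rnDeriv
          (Measure.pi (fun _ : Fin j => μ₀))) y).toReal)
      (Measure.map (fun (x : Fin N → X) (i : Fin j) => x (Fin.castLE hjN i)) μN)) :
    (1 / (j : ℝ)) * relEnt
        (Measure.map (fun (x : Fin N → X) (i : Fin j) => x (Fin.castLE hjN i)) μN)
        (Measure.pi (fun _ : Fin j => μ₀))
      ≤ (1 / (N : ℝ)) * relEnt μN (Measure.pi (fun _ : Fin N => μ₀)) := by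
  classical
  haveI : NeZero N := ⟨by omega⟩
  set PiN : Measure (Fin N → X) := Measure.pi fun _ : Fin N => μ₀ with hPiN
  set Pij : Measure (Fin j → X) := Measure.pi fun _ : Fin j => μ₀ with hPij
  set π : (Fin N → X) → (Fin j → X) := fun x i => x (Fin.castLE hjN i) with hπ
  set μj : Measure (Fin j → X) := Measure.map π μN with hμj
  set gN := μN.rnDeriv PiN with hgN
  set gj := μj.rnDeriv Pij with hgj
  set Dj := ∫ y, Real.log (gj y).toReal ∂μj with hDj
  set DN := ∫ x, Real.log (gN x).toReal ∂μN with hDN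
  -- measurability of basic maps
  have hπm : Measurable π := measurable_pi_lambda _ fun i => measurable_pi_apply _
  have hσm : ∀ σ : Equiv.Perm (Fin N), Measurable (fun x : Fin N → X => x ∘ σ) :=
    fun σ => measurable_pi_lambda _ fun k => measurable_pi_apply _
  have hgjm : Measurable gj := Measure.measurable_rnDeriv _ _
  have hgNm : Measurable gN := Measure.measurable_rnDeriv _ _
  -- windows
  set w : Fin N → (Fin N → X) → (Fin j → X) :=
    fun s x t => x (s + Fin.castLE hjN t) with hw
  have hw_eq : ∀ s, w s = π ∘ (fun x => x ∘ (Equiv.addLeft s : Equiv.Perm (Fin N))) := by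
    intro s
    funext x
    funext t
    simp [hw, hπ]
  have hwm : ∀ s, Measurable (w s) := by
    intro s
    rw [hw_eq s]
    exact hπm.comp (hσm _)
  have hmapw : ∀ s, Measure.map (w s) μN = μj := by
    intro s
    rw [hw_eq s, ← Measure.map_map hπm (hσm _), hsym _]
  have hmapw0 : ∀ s, Measure.map (w s) PiN = Pij := by
    intro s
    have h1 : Measure.map (fun x : Fin N → X => x ∘ (Equiv.addLeft s : Equiv.Perm (Fin N))) PiN
        = PiN := map_perm_pi μ₀ _
    have h2 : Measure.map π PiN = Pij := map_proj_pi μ₀ hjN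
    rw [hw_eq s, ← Measure.map_map hπm (hσm _), h1, h2]
  haveI : IsProbabilityMeasure μj := Measure.isProbabilityMeasure_map hπm.aemeasurable
  have hacj : μj ≪ Pij := by
    have h2 : Measure.map π PiN = Pij := map_proj_pi μ₀ hjN
    rw [hμj, ← h2]
    exact hac.map hπm
  -- window Finsets
  set A : Fin N → Finset (Fin N) :=
    fun s => Finset.image (fun t : Fin j => s + Fin.castLE hjN t) Finset.univ with hA
  have hmemA : ∀ s (t : Fin j), s + Fin.castLE hjN t ∈ A s :=
    fun s t => Finset.mem_image_of_mem _ (Finset.mem_univ t)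
  have hfilter : ∀ i : Fin N, Finset.univ.filter (fun s => i ∈ A s)
      = Finset.image (fun t : Fin j => i - Fin.castLE hjN t) Finset.univ := by
    intro i
    ext s
    simp only [Finset.mem_filter, Finset.mem_univ, true_and, hA, Finset.mem_image]
    constructor
    · rintro ⟨t, ht⟩
      exact ⟨t, by rw [← ht]; abel⟩
    · rintro ⟨t, ht⟩
      exact ⟨t, by rw [← ht]; abel⟩
  have hcov : ∀ i : Fin N,
      ∑ s ∈ Finset.univ.filter (fun s => i ∈ A s), (1 / (j : ℝ)) = 1 := by
    intro i
    rw [hfilter i, Finset.sum_const, Finset.card_image_of_injective _ ?hinj]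
    · simp only [Finset.card_univ, Fintype.card_fin, nsmul_eq_mul]
      field_simp
    case hinj =>
      intro t₁ t₂ h
      have := sub_right_injective h
      exact Fin.castLE_injective hjN this
  -- the family of functions for Finner's inequality
  have hm : ∀ s : Fin N, Measurable (fun x => gj (w s x)) :=
    fun s => hgjm.comp (hwm s)
  have hdep : ∀ s ∈ Finset.univ (α := Fin N), ∀ (x : Fin N → X) (i : Fin N) (y : X),
      i ∉ A s → gj (w s (Function.update x i y)) = gj (w s x) := by
    intro s _ x i y hi
    have hne : ∀ t : Fin j, s + Fin.castLE hjN t ≠ i := by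
      intro t he
      exact hi (he ▸ hmemA s t)
    congr 1
    funext t
    exact Function.update_of_ne (hne t) y x
  have hFin := finner (κ := Fin N) μ₀ Finset.univ A
    (fun s _ => by positivity) hcov (fun s x => gj (w s x)) hm hdep
  -- each window integral is 1
  have hlint_w : ∀ s : Fin N, ∫⁻ x, gj (w s x) ∂PiN = 1 := by
    intro s
    rw [← lintegral_map hgjm (hwm s), hmapw0 s, Measure.lintegral_rnDeriv hacj]
    exact measure_univ
  have hFin1 : ∫⁻ x, ∏ s : Fin N, gj (w s x) ^ (1 / (j : ℝ)) ∂PiN ≤ 1 := by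
    refine hFin.trans ?_
    rw [Finset.prod_congr rfl fun s (_ : s ∈ Finset.univ) => by rw [hlint_w s]]
    simp
  -- the comparison function
  set P : (Fin N → X) → ℝ≥0∞ := fun x => ∏ s : Fin N, gj (w s x) ^ (1 / (j : ℝ)) with hP
  set h : (Fin N → X) → ℝ≥0∞ := fun x => P x / gN x with hh
  have hPm : Measurable P :=
    Finset.measurable_prod _ fun s _ => (hm s).pow_const _
  have hhm : Measurable h := hPm.div hgNm
  -- lintegral bound
  have hlt1 : ∫⁻ x, h x ∂μN ≤ 1 := by
    conv_lhs => rw [← Measure.withDensity_rnDeriv_eq μN PiN hac]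
    rw [lintegral_withDensity_eq_lintegral_mul PiN (Measure.measurable_rnDeriv _ _) hhm]
    refine le_trans (lintegral_mono fun x => ?_) hFin1
    exact ENNReal.mul_div_le
  -- a.e. positivity/finiteness facts
  have hgNpos : ∀ᵐ x ∂μN, 0 < gN x := Measure.rnDeriv_pos hac
  have hgNfin : ∀ᵐ x ∂μN, gN x < ∞ := hac.ae_le (Measure.rnDeriv_lt_top μN PiN)
  have hwposfin : ∀ᵐ x ∂μN, ∀ s : Fin N, 0 < gj (w s x) ∧ gj (w s x) < ∞ := by
    rw [MeasureTheory.ae_all_iff]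
    intro s
    have hj1 : ∀ᵐ y ∂μj, 0 < gj y ∧ gj y < ∞ :=
      (Measure.rnDeriv_pos hacj).and (hacj.ae_le (Measure.rnDeriv_lt_top μj Pij))
    rw [← hmapw s] at hj1
    have hms : MeasurableSet {y : Fin j → X | 0 < gj y ∧ gj y < ∞} :=
      hgjm measurableSet_Ioo
    exact (ae_map_iff (hwm s).aemeasurable hms).mp hj1
  -- a.e. identity for the logarithm
  have hae : ∀ᵐ x ∂μN, Real.log (h x).toReal
      = (1 / (j : ℝ)) * (∑ s : Fin N, Real.log (gj (w s x)).toReal)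
        - Real.log (gN x).toReal := by
    filter_upwards [hgNpos, hgNfin, hwposfin] with x h1 h2 h3
    have htR : ∀ s : Fin N, 0 < (gj (w s x)).toReal :=
      fun s => ENNReal.toReal_pos (h3 s).1.ne' (h3 s).2.ne
    have hPR : (P x).toReal = ∏ s : Fin N, (gj (w s x)).toReal ^ (1 / (j : ℝ)) := by
      rw [hP]
      rw [ENNReal.toReal_prod]
      exact Finset.prod_congr rfl fun s _ => (ENNReal.toReal_rpow _ _).symm
    have hPRpos : 0 < (P x).toReal := by
      rw [hPR]
      exact Finset.prod_pos fun s _ => Real.rpow_pos_of_pos (htR s) _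
    have hgNR : 0 < (gN x).toReal := ENNReal.toReal_pos h1.ne' h2.ne
    have hhR : (h x).toReal = (P x).toReal / (gN x).toReal := by
      rw [hh]
      exact ENNReal.toReal_div _ _
    rw [hhR, Real.log_div hPRpos.ne' hgNR.ne', hPR,
      Real.log_prod (fun s _ => (Real.rpow_pos_of_pos (htR s) _).ne')]
    congr 1
    rw [Finset.mul_sum]
    exact Finset.sum_congr rfl fun s _ => (Real.log_rpow (htR s) _)
  -- integrability and values of the window log-integrals
  have hstr : AEStronglyMeasurable (fun y => Real.log (gj y).toReal) μj :=
    (Real.measurable_log.comp hgjm.ennreal_toReal).aestronglyMeasurable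
  have hint_s : ∀ s : Fin N, Integrable (fun x => Real.log (gj (w s x)).toReal) μN := by
    intro s
    have h1 := (integrable_map_measure (f := w s)
      (by rw [hmapw s]; exact hstr) (hwm s).aemeasurable).mp (by rw [hmapw s]; exact hintj)
    exact h1
  have heq_s : ∀ s : Fin N, ∫ x, Real.log (gj (w s x)).toReal ∂μN = Dj := by
    intro s
    rw [hDj, ← hmapw s, integral_map (hwm s).aemeasurable (by rw [hmapw s]; exact hstr)]
  -- the function F
  set F : (Fin N → X) → ℝ :=
    fun x => (1 / (j : ℝ)) * ∑ s : Fin N, Real.log (gj (w s x)).toReal with hF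
  have hFint : Integrable F μN :=
    (integrable_finset_sum _ fun s _ => hint_s s).const_mul _
  have hFval : ∫ x, F x ∂μN = ((N : ℝ) / j) * Dj := by
    rw [hF]
    rw [integral_const_mul, integral_finset_sum _ fun s _ => hint_s s]
    rw [Finset.sum_congr rfl fun s _ => heq_s s, Finset.sum_const, Finset.card_univ,
      Fintype.card_fin, nsmul_eq_mul]
    ring
  -- integrability of h.toReal
  have hInth : Integrable (fun x => (h x).toReal) μN :=
    integrable_toReal_of_lintegral_ne_top hhm.aemeasurable
      (lt_of_le_of_lt hlt1 ENNReal.one_lt_top).ne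
  have hfin_h : ∀ᵐ x ∂μN, h x < ∞ := by
    filter_upwards [hgNpos, hwposfin] with x h1 h3
    have hPfin : P x < ∞ := ENNReal.prod_lt_top fun s _ =>
      ENNReal.rpow_lt_top_of_nonneg (by positivity) (h3 s).2.ne
    exact ENNReal.div_lt_top hPfin.ne h1.ne'
  have hIv : ∫ x, (h x).toReal ∂μN = (∫⁻ x, h x ∂μN).toReal :=
    integral_toReal hhm.aemeasurable hfin_h
  have hposR : ∀ᵐ x ∂μN, 0 < (h x).toReal := by
    filter_upwards [hgNpos, hgNfin, hwposfin] with x h1 h2 h3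
    have hPpos : P x ≠ 0 :=
      Finset.prod_ne_zero_iff.mpr fun s _ => (ENNReal.rpow_pos (h3 s).1 (h3 s).2.ne).ne'
    have hPfin : P x < ∞ := ENNReal.prod_lt_top fun s _ =>
      ENNReal.rpow_lt_top_of_nonneg (by positivity) (h3 s).2.ne
    refine ENNReal.toReal_pos ?_ (ENNReal.div_lt_top hPfin.ne h1.ne').ne
    exact (ENNReal.div_pos hPpos h2.ne).ne'
  have hlog_int : Integrable (fun x => Real.log (h x).toReal) μN := by
    refine (hFint.sub hintN).congr ?_
    filter_upwards [hae] with x hx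
    exact hx.symm
  -- main inequality
  have key : ((N : ℝ) / j) * Dj - DN ≤ 0 := by
    have h1 : ((N : ℝ) / j) * Dj - DN = ∫ x, Real.log (h x).toReal ∂μN := by
      rw [integral_congr_ae hae, integral_sub hFint hintN, hFval]
    rw [h1]
    calc ∫ x, Real.log (h x).toReal ∂μN
        ≤ ∫ x, ((h x).toReal - 1) ∂μN := by
          refine integral_mono_ae hlog_int (hInth.sub (integrable_const 1)) ?_
          filter_upwards [hposR] with x hx
          exact Real.log_le_sub_one_of_pos hx
      _ = ∫ x, (h x).toReal ∂μN - 1 := by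
          rw [integral_sub hInth (integrable_const 1), integral_const]
          simp
      _ ≤ 0 := by
          rw [hIv]
          have h2 : (∫⁻ x, h x ∂μN).toReal ≤ 1 := by
            calc (∫⁻ x, h x ∂μN).toReal ≤ (1 : ℝ≥0∞).toReal :=
              ENNReal.toReal_mono ENNReal.one_ne_top hlt1
            _ = 1 := by simp
          linarith
  -- conclude
  have hjR : (0 : ℝ) < j := by exact_mod_cast hj
  have hNR : (0 : ℝ) < N := by
    have : 0 < N := by omega
    exact_mod_cast this
  show (1 / (j : ℝ)) * Dj ≤ (1 / (N : ℝ)) * DN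
  have heq : (1 / (j : ℝ)) * Dj = (1 / (N : ℝ)) * (((N : ℝ) / j) * Dj) := by
    field_simp
  rw [heq]
  have := mul_le_mul_of_nonneg_left (by linarith : ((N : ℝ) / j) * Dj ≤ DN)
    (le_of_lt (by positivity : (0 : ℝ) < 1 / (N : ℝ)))
  linarith
end

section
/- Let X be a compact metric space and W : X² → [0,∞] lower semi-continuous with sup_{x∈X} ∫_X e^{-β₀ W(x,y)} dμ₀(y) < ∞ for some β₀ < 0. Then for any β with β₀ < β < 0, sup_N (1/N) log ∫_{X^N} e^{-β H^{(N)}} dμ₀^{⊗N} < ∞, where H^{(N)} is the renormalized mean field Hamiltonian of W. -/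
open MeasureTheory
open scoped ENNReal

lemma aux_split {X : Type*} [MeasurableSpace X] (μ : Measure X) [IsProbabilityMeasure μ]
    {n : ℕ} (i : Fin (n + 1)) (F : (Fin (n + 1) → X) → ℝ≥0∞) (hF : Measurable F) :
    ∫⁻ x, F x ∂Measure.pi (fun _ : Fin (n + 1) => μ)
      = ∫⁻ a, ∫⁻ y : Fin n → X, F (i.insertNth a y) ∂Measure.pi (fun _ => μ) ∂μ := by
  have h := (measurePreserving_piFinSuccAbove (fun _ : Fin (n + 1) => μ) i).symm
  rw [← h.lintegral_comp hF,
    show (fun a => F ((MeasurableEquiv.piFinSuccAbove (fun _ : Fin (n+1) => X) i).symm a))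
      = F ∘ (MeasurableEquiv.piFinSuccAbove (fun _ : Fin (n+1) => X) i).symm from rfl,
    lintegral_prod _ (hF.comp h.measurable).aemeasurable]
  simp only [Function.comp_apply, MeasurableEquiv.piFinSuccAbove_symm_apply,
    Fin.insertNthEquiv, Equiv.coe_fn_mk]

lemma aux_pi_pow {X : Type*} [MeasurableSpace X] (μ : Measure X) [IsProbabilityMeasure μ]
    (f : X → ℝ≥0∞) (hf : Measurable f) (n : ℕ) :
    ∫⁻ y : Fin n → X, ∏ j, f (y j) ∂Measure.pi (fun _ => μ) = (∫⁻ x, f x ∂μ) ^ n := by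
  induction n with
  | zero => simp
  | succ n ih =>
    have hm : Measurable fun y : Fin (n + 1) → X => ∏ j, f (y j) :=
      Finset.measurable_prod _ fun j _ => hf.comp (measurable_pi_apply j)
    rw [aux_split μ 0 _ hm]
    have key : ∀ (a : X) (y : Fin n → X),
        ∏ j, f (Fin.insertNth (α := fun _ => X) 0 a y j) = f a * ∏ j, f (y j) := by
      intro a y
      rw [Fin.prod_univ_succAbove _ (0 : Fin (n+1)), Fin.insertNth_apply_same]
      simp [Fin.insertNth_apply_succAbove]
    calc ∫⁻ a, ∫⁻ y : Fin n → X, ∏ j, f (Fin.insertNth (α := fun _ => X) 0 a y j)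
            ∂Measure.pi (fun _ => μ) ∂μ
        = ∫⁻ a, ∫⁻ y : Fin n → X, f a * ∏ j, f (y j) ∂Measure.pi (fun _ => μ) ∂μ :=
          lintegral_congr fun a => lintegral_congr fun y => key a y
      _ = ∫⁻ a, f a * (∫⁻ x, f x ∂μ) ^ n ∂μ := by
          refine lintegral_congr fun a => ?_
          have hm2 : Measurable fun y : Fin n → X => ∏ j, f (y j) :=
            Finset.measurable_prod _ fun j _ => hf.comp (measurable_pi_apply j)
          rw [lintegral_const_mul _ hm2, ih]
      _ = (∫⁻ x, f x ∂μ) ^ (n + 1) := by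
          rw [lintegral_mul_const _ hf, pow_succ, mul_comm]

/-- If `W ≥ 0` is lsc and symmetric on a compact metric space and
`sup_x ∫ e^{-β₀ W(x,y)} dμ₀(y) < ∞` for some `β₀ < 0`, then for any `β₀ < β < 0`
the partition functions satisfy `sup_N (1/N) log Z_{N,β} < ∞`, i.e.
`Z_{N,β} ≤ e^{CN}` for some constant `C`. -/
theorem stmt7 {X : Type*} [MetricSpace X] [CompactSpace X] [MeasurableSpace X] [BorelSpace X]
    (μ₀ : Measure X) [IsProbabilityMeasure μ₀]
    (W : X → X → ℝ) (hW0 : ∀ x y, 0 ≤ W x y)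
    (hWlsc : LowerSemicontinuous (fun p : X × X => W p.1 p.2))
    (hWsym : ∀ x y, W x y = W y x)
    (β₀ β : ℝ) (hβ₀ : β₀ < β) (hβ : β < 0)
    (A : ℝ≥0∞) (hA : A ≠ ⊤)
    (hint : ∀ x : X, ∫⁻ y, ENNReal.ofReal (Real.exp (-β₀ * W x y)) ∂μ₀ ≤ A) :
    ∃ c : ℝ, ∀ N : ℕ, 1 ≤ N →
      ∫⁻ x : Fin N → X,
          ENNReal.ofReal (Real.exp (-β * ((1 / (N : ℝ)) *
            ∑ i : Fin N, ∑ j : Fin N, if i ≠ j then W (x i) (x j) else 0)))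
          ∂(Measure.pi (fun _ : Fin N => μ₀))
        ≤ ENNReal.ofReal (Real.exp (c * N)) := by
  have hWm : Measurable (fun p : X × X => W p.1 p.2) := hWlsc.measurable
  set g : X → X → ℝ≥0∞ := fun a b => ENNReal.ofReal (Real.exp (-β * W a b)) with hg
  have hgm : ∀ a, Measurable (g a) := fun a =>
    ENNReal.measurable_ofReal.comp <| Real.measurable_exp.comp <|
      (hWm.comp (measurable_const.prodMk measurable_id)).const_mul (-β)
  set B : ℝ≥0∞ := A ⊔ 1 with hBdef
  have hBne : B ≠ ⊤ :=
    (sup_lt_iff.mpr ⟨lt_top_iff_ne_top.mpr hA, ENNReal.one_lt_top⟩).ne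
  have hgA : ∀ a, ∫⁻ b, g a b ∂μ₀ ≤ B := by
    intro a
    refine le_trans (le_trans (lintegral_mono fun b => ?_) (hint a)) le_sup_left
    exact ENNReal.ofReal_le_ofReal <| Real.exp_le_exp.mpr <|
      mul_le_mul_of_nonneg_right (by linarith) (hW0 a b)
  set b : ℝ := B.toReal with hbdef
  have hb1 : 1 ≤ b := by
    have := ENNReal.toReal_mono hBne (le_sup_right (a := A) (b := (1:ℝ≥0∞)))
    simpa using this
  have hb0 : 0 < b := lt_of_lt_of_le one_pos hb1
  have hBofReal : B = ENNReal.ofReal b := (ENNReal.ofReal_toReal hBne).symm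
  refine ⟨1 + Real.log b, ?_⟩
  rintro N hN
  obtain ⟨n, rfl⟩ : ∃ n, N = n + 1 := ⟨N - 1, (Nat.succ_pred_eq_of_pos hN).symm⟩
  set c : ℝ := 1 + Real.log b with hcdef
  -- notation
  set μp := Measure.pi (fun _ : Fin (n+1) => μ₀) with hμp
  set T : (Fin (n+1) → X) → Fin (n+1) → ℝ :=
    fun x i => ∑ j, if i ≠ j then W (x i) (x j) else 0 with hT
  have hT0 : ∀ x i, 0 ≤ T x i := fun x i =>
    Finset.sum_nonneg fun j _ => by by_cases h : i ≠ j <;> simp [h, hW0]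
  have hTm : ∀ i, Measurable fun x => T x i := by
    intro i
    refine Finset.measurable_sum _ fun j _ => ?_
    by_cases h : i ≠ j
    · simp only [if_pos h]
      have hpair : Measurable fun x : Fin (n+1) → X => ((x i, x j) : X × X) :=
        (measurable_pi_apply i).prodMk (measurable_pi_apply j)
      exact hWm.comp hpair
    · simp only [if_neg h]
      exact measurable_const
  have hFm : ∀ i : Fin (n+1),
      Measurable fun x : Fin (n+1) → X => ENNReal.ofReal (Real.exp (-β * T x i)) := fun i =>
    ENNReal.measurable_ofReal.comp <| Real.measurable_exp.comp <| ((hTm i).const_mul (-β))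
  -- Step 1 : pointwise bound
  have step1 : ∀ x : Fin (n+1) → X,
      ENNReal.ofReal (Real.exp (-β * ((1 / ((n+1 : ℕ) : ℝ)) * ∑ i, T x i)))
        ≤ ∑ i, ENNReal.ofReal (Real.exp (-β * T x i)) := by
    intro x
    obtain ⟨i₀, -, hi₀⟩ := Finset.exists_max_image Finset.univ (T x) ⟨0, Finset.mem_univ 0⟩
    have havg : (1 / ((n+1 : ℕ) : ℝ)) * ∑ i, T x i ≤ T x i₀ := by
      have hsum : ∑ i, T x i ≤ ((n+1 : ℕ) : ℝ) * T x i₀ := by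
        calc ∑ i, T x i ≤ ∑ _i : Fin (n+1), T x i₀ :=
              Finset.sum_le_sum fun i _ => hi₀ i (Finset.mem_univ i)
          _ = ((n+1 : ℕ) : ℝ) * T x i₀ := by simp [mul_comm]
      rw [one_div, inv_mul_le_iff₀ (by positivity)]
      exact hsum
    calc ENNReal.ofReal (Real.exp (-β * ((1 / ((n+1 : ℕ) : ℝ)) * ∑ i, T x i)))
        ≤ ENNReal.ofReal (Real.exp (-β * T x i₀)) := by
          exact ENNReal.ofReal_le_ofReal <| Real.exp_le_exp.mpr <|
            mul_le_mul_of_nonneg_left havg (by linarith)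
      _ ≤ ∑ i, ENNReal.ofReal (Real.exp (-β * T x i)) :=
          Finset.single_le_sum (f := fun i => ENNReal.ofReal (Real.exp (-β * T x i)))
            (fun i _ => zero_le) (Finset.mem_univ i₀)
  -- Step 2 : each term integrates to at most B ^ n
  have step2 : ∀ i : Fin (n+1),
      ∫⁻ x, ENNReal.ofReal (Real.exp (-β * T x i)) ∂μp ≤ B ^ n := by
    intro i
    rw [aux_split μ₀ i _ (hFm i)]
    have key : ∀ (a : X) (y : Fin n → X),
        ENNReal.ofReal (Real.exp (-β * T (i.insertNth a y) i)) = ∏ j, g a (y j) := by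
      intro a y
      have hTsum : T (i.insertNth a y) i = ∑ j : Fin n, W a (y j) := by
        simp only [hT, Fin.insertNth_apply_same]
        rw [Fin.sum_univ_succAbove
          (fun j => if i ≠ j then W a (Fin.insertNth (α := fun _ => X) i a y j) else 0) i]
        have h0 : (if i ≠ i then W a (Fin.insertNth (α := fun _ => X) i a y i) else 0) = 0 := by
          simp
        rw [h0, zero_add]
        refine Finset.sum_congr rfl fun j _ => ?_
        have hne : i ≠ i.succAbove j := (Fin.succAbove_ne i j).symm
        rw [if_pos hne, Fin.insertNth_apply_succAbove]
      rw [hTsum, Finset.mul_sum, Real.exp_sum,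
        ENNReal.ofReal_prod_of_nonneg fun j _ => (Real.exp_pos _).le]
    calc ∫⁻ a, ∫⁻ y : Fin n → X,
            ENNReal.ofReal (Real.exp (-β * T (i.insertNth a y) i)) ∂Measure.pi (fun _ => μ₀) ∂μ₀
        = ∫⁻ a, ∫⁻ y : Fin n → X, ∏ j, g a (y j) ∂Measure.pi (fun _ => μ₀) ∂μ₀ :=
          lintegral_congr fun a => lintegral_congr fun y => key a y
      _ = ∫⁻ a, (∫⁻ z, g a z ∂μ₀) ^ n ∂μ₀ :=
          lintegral_congr fun a => aux_pi_pow μ₀ (g a) (hgm a) n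
      _ ≤ ∫⁻ _a, B ^ n ∂μ₀ := lintegral_mono fun a => pow_le_pow_left' (hgA a) n
      _ = B ^ n := by simp
  -- combine
  calc ∫⁻ x : Fin (n+1) → X,
        ENNReal.ofReal (Real.exp (-β * ((1 / (((n+1) : ℕ) : ℝ)) *
          ∑ i : Fin (n+1), ∑ j : Fin (n+1), if i ≠ j then W (x i) (x j) else 0))) ∂μp
      ≤ ∫⁻ x, ∑ i, ENNReal.ofReal (Real.exp (-β * T x i)) ∂μp := lintegral_mono step1
    _ = ∑ i, ∫⁻ x, ENNReal.ofReal (Real.exp (-β * T x i)) ∂μp :=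
        lintegral_finset_sum _ fun i _ => hFm i
    _ ≤ ∑ _i : Fin (n+1), B ^ n := Finset.sum_le_sum fun i _ => step2 i
    _ = (((n+1) : ℕ) : ℝ≥0∞) * B ^ n := by simp [mul_comm]
    _ ≤ ENNReal.ofReal (Real.exp (c * ((n+1) : ℕ))) := by
        rw [hBofReal, ← ENNReal.ofReal_pow hb0.le, ← ENNReal.ofReal_natCast (n+1),
          ← ENNReal.ofReal_mul (by positivity)]
        refine ENNReal.ofReal_le_ofReal ?_
        set Nr : ℝ := ((n+1 : ℕ) : ℝ) with hNr
        have hNr1 : 1 ≤ Nr := by rw [hNr]; exact_mod_cast hN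
        have h1 : Nr ≤ Real.exp Nr := le_trans (by linarith) (Real.add_one_le_exp Nr)
        have h2 : b ^ n ≤ Real.exp (Nr * Real.log b) := by
          calc b ^ n ≤ b ^ (n+1) := pow_le_pow_right₀ hb1 (Nat.le_succ n)
            _ = Real.exp (Real.log b) ^ (n+1) := by rw [Real.exp_log hb0]
            _ = Real.exp (Nr * Real.log b) := by
                rw [← Real.exp_nat_mul, hNr]
        calc Nr * b ^ n ≤ Real.exp Nr * Real.exp (Nr * Real.log b) :=
              mul_le_mul h1 h2 (by positivity) (Real.exp_pos _).le
          _ = Real.exp (c * Nr) := by rw [← Real.exp_add]; congr 1; rw [hcdef]; ring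
end

section
/- Lower bound in Gamma-convergence of mean-field energies: let W : X^m → (−∞, ∞] be lower semi-continuous on a compact metric space X, and let H^{(N)} be the renormalized mean-field Hamiltonian summing W over all m-tuples of distinct indices scaled by N^{−(m−1)}. If x^{(N)} ∈ X^N are configurations whose empirical measures δ_N(x^{(N)}) converge weakly to μ ∈ P(X), then liminf_{N→∞} H^{(N)}(x^{(N)})/N ≥ ∫_{X^m} W dμ^{⊗m}. -/
open MeasureTheory Filter
open scoped ENNReal BoundedContinuousFunction

namespace Stmt15Aux

section Emp
variable {X : Type*} [MeasurableSpace X]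

/-- The (renormalized) empirical measure of a configuration. -/
noncomputable def emp {N : ℕ} (x : Fin N → X) : Measure X :=
  ((N : ℝ≥0∞))⁻¹ • ∑ i : Fin N, Measure.dirac (x i)

lemma emp_apply {N : ℕ} (x : Fin N → X) {s : Set X} (hs : MeasurableSet s) :
    emp x s = ((N : ℝ≥0∞))⁻¹ * ∑ i : Fin N, s.indicator 1 (x i) := by
  simp only [emp, Measure.smul_apply, Measure.finset_sum_apply, smul_eq_mul]
  congr 1
  exact Finset.sum_congr rfl fun i _ => Measure.dirac_apply' _ hs

lemma emp_prob {N : ℕ} (hN : N ≠ 0) (x : Fin N → X) : IsProbabilityMeasure (emp x) := by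
  constructor
  rw [emp_apply x MeasurableSet.univ]
  simp only [Set.indicator_univ, Pi.one_apply, Finset.sum_const, Finset.card_univ,
    Fintype.card_fin, nsmul_eq_mul, mul_one]
  exact ENNReal.inv_mul_cancel (by exact_mod_cast hN) (ENNReal.natCast_ne_top N)

lemma pi_emp {m N : ℕ} (hN : N ≠ 0) (x : Fin N → X) :
    Measure.pi (fun _ : Fin m => emp x)
      = ((N : ℝ≥0∞) ^ m)⁻¹ • ∑ I : Fin m → Fin N, Measure.dirac (fun k => x (I k)) := by
  haveI := emp_prob hN x
  refine Measure.pi_eq fun s hs => ?_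
  rw [Measure.smul_apply, Measure.finset_sum_apply, smul_eq_mul]
  have key : ∀ I : Fin m → Fin N, Measure.dirac (fun k => x (I k)) (Set.univ.pi s)
      = ∏ k : Fin m, (s k).indicator (1 : X → ℝ≥0∞) (x (I k)) := by
    intro I
    rw [Measure.dirac_apply' _ (MeasurableSet.univ_pi hs)]
    by_cases h : (fun k => x (I k)) ∈ Set.univ.pi s
    · rw [Set.indicator_of_mem h]
      refine (Finset.prod_eq_one fun k _ => ?_).symm
      rw [Set.indicator_of_mem (h k (Set.mem_univ k)), Pi.one_apply]
    · rw [Set.indicator_of_notMem h]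
      have h' : ¬ ∀ k : Fin m, x (I k) ∈ s k := fun hall => h fun k _ => hall k
      obtain ⟨k, hk⟩ := not_forall.mp h'
      exact (Finset.prod_eq_zero (Finset.mem_univ k)
        (by rw [Set.indicator_of_notMem hk])).symm
  simp_rw [key]
  rw [← Fintype.piFinset_univ, ← Finset.prod_univ_sum (fun _ : Fin m => (Finset.univ : Finset (Fin N)))
    (fun k i => (s k).indicator (1 : X → ℝ≥0∞) (x i))]
  simp_rw [emp_apply x (hs _)]
  rw [Finset.prod_mul_distrib, Finset.prod_const, Finset.card_univ, Fintype.card_fin,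
    ← ENNReal.inv_pow]

lemma lintegral_pi_emp {m N : ℕ} (hN : N ≠ 0) (x : Fin N → X) {f : (Fin m → X) → ℝ≥0∞}
    (hf : Measurable f) :
    ∫⁻ y, f y ∂Measure.pi (fun _ : Fin m => emp x)
      = ((N : ℝ≥0∞) ^ m)⁻¹ * ∑ I : Fin m → Fin N, f (fun k => x (I k)) := by
  rw [pi_emp hN x, lintegral_smul_measure, lintegral_finset_sum_measure]
  congr 1
  exact Finset.sum_congr rfl fun I _ => lintegral_dirac' _ hf

lemma integrable_dirac'' {f : X → ℝ}
    (hf : StronglyMeasurable f) (a : X) : Integrable f (Measure.dirac a) := by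
  refine ⟨hf.aestronglyMeasurable, ?_⟩
  rw [HasFiniteIntegral, lintegral_dirac' _ (hf.measurable.enorm)]
  exact ENNReal.coe_lt_top

lemma integral_emp {N : ℕ} (x : Fin N → X) {f : X → ℝ} (hf : StronglyMeasurable f) :
    ∫ a, f a ∂emp x = (N : ℝ)⁻¹ * ∑ i : Fin N, f (x i) := by
  rw [emp, integral_smul_measure,
    integral_finset_sum_measure (fun i _ => integrable_dirac'' hf (x i))]
  simp_rw [integral_dirac' _ _ hf]
  rw [ENNReal.toReal_inv, smul_eq_mul]
  simp

lemma integral_pi_prod {m : ℕ} (ρ : Measure X) [SigmaFinite ρ] (g : Fin m → X → ℝ) :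
    ∫ y, ∏ k : Fin m, g k (y k) ∂Measure.pi (fun _ : Fin m => ρ) = ∏ k : Fin m, ∫ a, g k a ∂ρ := by
  letI : MeasureSpace X := ⟨ρ⟩
  have hv : (volume : Measure (Fin m → X)) = Measure.pi (fun _ : Fin m => ρ) := volume_pi
  rw [← hv]
  exact MeasureTheory.integral_fintype_prod_eq_prod (μ := fun _ => ρ) g

end Emp
section Weak

variable {X : Type*} [MetricSpace X] [CompactSpace X] [MeasurableSpace X] [BorelSpace X]

lemma cont_integrable {K : Type*} [MetricSpace K] [CompactSpace K] [MeasurableSpace K]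
    [OpensMeasurableSpace K] (h : C(K, ℝ)) (ρ : Measure K) [IsFiniteMeasure ρ] :
    Integrable h ρ :=
  BoundedContinuousFunction.integrable ρ (BoundedContinuousFunction.mkOfCompact h)

/-- Weak convergence of product measures from weak convergence of factors, on
a compact metric space, via Stone-Weierstrass. -/
lemma tendsto_integral_pi (m : ℕ)
    (μ : Measure X) [IsProbabilityMeasure μ] (ν : ℕ → Measure X)
    [∀ N, IsProbabilityMeasure (ν N)]
    (hconv : ∀ g : C(X, ℝ), Tendsto (fun N => ∫ a, g a ∂ν N) atTop (nhds (∫ a, g a ∂μ)))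
    (f : (Fin m → X) →ᵇ ℝ) :
    Tendsto (fun N => ∫ y, f y ∂Measure.pi (fun _ : Fin m => ν N)) atTop
      (nhds (∫ y, f y ∂Measure.pi (fun _ : Fin m => μ))) := by
  set K := (Fin m → X)
  let ev : Fin m → C(K, X) := fun k => ⟨fun y => y k, continuous_apply k⟩
  set S : Set C(K, ℝ) := {F | ∃ g : Fin m → C(X, ℝ), F = ∏ k : Fin m, (g k).comp (ev k)} with hS
  -- the integral of an element of S against a product measure
  have hprod : ∀ (g : Fin m → C(X, ℝ)) (ρ : Measure X), IsProbabilityMeasure ρ →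
      ∫ y, (∏ k : Fin m, (g k).comp (ev k)) y ∂Measure.pi (fun _ : Fin m => ρ)
        = ∏ k : Fin m, ∫ a, g k a ∂ρ := by
    intro g ρ hρ
    have : ∀ y : K, (∏ k : Fin m, (g k).comp (ev k)) y = ∏ k : Fin m, g k (y k) := by
      intro y
      rw [ContinuousMap.prod_apply]
      rfl
    simp_rw [this]
    exact integral_pi_prod ρ (fun k a => g k a)
  -- the key property
  set Q : C(K, ℝ) → Prop := fun h => Tendsto (fun N => ∫ y, h y ∂Measure.pi (fun _ : Fin m => ν N))
      atTop (nhds (∫ y, h y ∂Measure.pi (fun _ : Fin m => μ))) with hQdef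
  have hQS : ∀ h ∈ S, Q h := by
    rintro _ ⟨g, rfl⟩
    simp only [hQdef]
    have h1 : ∀ N, ∫ y, (∏ k : Fin m, (g k).comp (ev k)) y ∂Measure.pi (fun _ : Fin m => ν N)
        = ∏ k : Fin m, ∫ a, g k a ∂ν N := fun N => hprod g (ν N) inferInstance
    simp_rw [h1, hprod g μ inferInstance]
    exact tendsto_finset_prod _ (fun k _ => hconv (g k))
  -- S is multiplicatively closed, contains 1
  have hone : (1 : C(K, ℝ)) ∈ S := by
    refine ⟨fun _ => 1, ?_⟩
    simp [ContinuousMap.one_comp]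
  have hmul : ∀ a ∈ S, ∀ b ∈ S, a * b ∈ S := by
    rintro _ ⟨g, rfl⟩ _ ⟨g', rfl⟩
    refine ⟨fun k => g k * g' k, ?_⟩
    simp_rw [ContinuousMap.mul_comp]
    rw [Finset.prod_mul_distrib]
  -- Q holds on the subalgebra generated by S
  have hQA : ∀ h ∈ Algebra.adjoin ℝ S, Q h := by
    intro h hh
    have hh' : h ∈ Submodule.span ℝ ((Submonoid.closure S : Submonoid C(K, ℝ)) : Set C(K, ℝ)) := by
      rw [← Algebra.adjoin_eq_span]; exact hh
    have hsub : ((Submonoid.closure S : Submonoid C(K, ℝ)) : Set C(K, ℝ)) ⊆ S := by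
      intro a ha
      refine Submonoid.closure_induction (fun b hb => hb) hone (fun b c _ _ hb hc => hmul b hb c hc) ha
    refine Submodule.span_induction (fun a ha => hQS a (hsub ha)) ?_ ?_ ?_ hh'
    · simp only [hQdef, ContinuousMap.zero_apply, integral_zero]
      exact tendsto_const_nhds
    · intro a b _ _ ha hb
      simp only [hQdef] at ha hb ⊢
      have key : ∀ (ρ : Measure K), IsProbabilityMeasure ρ →
          ∫ y, (a + b) y ∂ρ = (∫ y, a y ∂ρ) + ∫ y, b y ∂ρ := by
        intro ρ hρ
        exact integral_add (cont_integrable a ρ) (cont_integrable b ρ)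
      simp_rw [ContinuousMap.add_apply] at key ⊢
      have h1 : ∀ N, ∫ y, (a y + b y) ∂Measure.pi (fun _ : Fin m => ν N)
          = (∫ y, a y ∂Measure.pi (fun _ : Fin m => ν N)) + ∫ y, b y ∂Measure.pi (fun _ : Fin m => ν N) :=
        fun N => key _ inferInstance
      simp_rw [h1, show (∫ y, (a y + b y) ∂Measure.pi (fun _ : Fin m => μ)) = _ from key _ inferInstance]
      exact ha.add hb
    · intro c a _ ha
      simp only [hQdef] at ha ⊢
      simp_rw [ContinuousMap.smul_apply, integral_smul]
      exact ha.const_smul c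
  -- the subalgebra separates points, hence is dense
  have hsep : (Algebra.adjoin ℝ S).SeparatesPoints := by
    intro y y' hne
    have : ∃ k, y k ≠ y' k := by
      by_contra hc
      push_neg at hc
      exact hne (funext hc)
    obtain ⟨k, hk⟩ := this
    set g : Fin m → C(X, ℝ) := fun j =>
      if j = k then ⟨fun a => dist a (y' k), (continuous_id.dist continuous_const)⟩ else 1 with hg
    refine ⟨_, ⟨∏ j : Fin m, (g j).comp (ev j), Algebra.subset_adjoin ⟨g, rfl⟩, rfl⟩, ?_⟩
    have hval : ∀ z : K, (∏ j : Fin m, (g j).comp (ev j)) z = dist (z k) (y' k) := by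
      intro z
      rw [ContinuousMap.prod_apply]
      rw [Finset.prod_eq_single k]
      · simp [hg, ev]
      · intro j _ hj
        simp [hg, hj]
      · simp
    show (∏ j : Fin m, (g j).comp (ev j)) y ≠ (∏ j : Fin m, (g j).comp (ev j)) y'
    rw [hval, hval]
    simp only [dist_self]
    exact fun h => hk (dist_eq_zero.mp h)
  -- approximation argument
  have hprob : ∀ (ρ : Measure K), IsProbabilityMeasure ρ → ∀ (u v : C(K, ℝ)) (ε : ℝ),
      ‖u - v‖ ≤ ε → |(∫ y, u y ∂ρ) - ∫ y, v y ∂ρ| ≤ ε := by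
    intro ρ hρ u v ε hε
    rw [← integral_sub (cont_integrable u ρ) (cont_integrable v ρ)]
    have := norm_integral_le_of_norm_le_const (μ := ρ) (f := fun y => u y - v y) (C := ε)
      (Filter.Eventually.of_forall fun y => by
        calc ‖u y - v y‖ = ‖(u - v) y‖ := by simp
        _ ≤ ‖u - v‖ := ContinuousMap.norm_coe_le_norm _ y
        _ ≤ ε := hε)
    simpa [measure_univ] using this
  rw [Metric.tendsto_atTop]
  intro ε hε
  obtain ⟨h, hmem, hnear⟩ : ∃ h ∈ Algebra.adjoin ℝ S, ‖(h : C(K, ℝ)) - f.toContinuousMap‖ < ε / 3 := by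
    obtain ⟨⟨h, hmem⟩, hh⟩ := ContinuousMap.exists_mem_subalgebra_near_continuousMap_of_separatesPoints
      (Algebra.adjoin ℝ S) hsep f.toContinuousMap (ε / 3) (by linarith)
    exact ⟨h, hmem, hh⟩
  have hQh := hQA h hmem
  rw [hQdef, Metric.tendsto_atTop] at hQh
  obtain ⟨N₀, hN₀⟩ := hQh (ε / 3) (by linarith)
  refine ⟨N₀, fun N hN => ?_⟩
  have e2 := hN₀ N hN
  have e1' : dist (∫ y, f y ∂(Measure.pi fun _ : Fin m => ν N))
      (∫ y, (h : C(K, ℝ)) y ∂(Measure.pi fun _ : Fin m => ν N)) ≤ ε / 3 := by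
    rw [Real.dist_eq]
    exact hprob (Measure.pi fun _ : Fin m => ν N) inferInstance f.toContinuousMap h (ε / 3)
      (by rw [norm_sub_rev]; exact hnear.le)
  have e3' : dist (∫ y, (h : C(K, ℝ)) y ∂(Measure.pi fun _ : Fin m => μ))
      (∫ y, f y ∂(Measure.pi fun _ : Fin m => μ)) ≤ ε / 3 := by
    rw [Real.dist_eq]
    exact hprob (Measure.pi fun _ : Fin m => μ) inferInstance h f.toContinuousMap (ε / 3) hnear.le
  have tri := dist_triangle4 (∫ y, f y ∂(Measure.pi fun _ : Fin m => ν N))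
    (∫ y, (h : C(K, ℝ)) y ∂(Measure.pi fun _ : Fin m => ν N))
    (∫ y, (h : C(K, ℝ)) y ∂(Measure.pi fun _ : Fin m => μ))
    (∫ y, f y ∂(Measure.pi fun _ : Fin m => μ))
  exact lt_of_le_of_lt tri (by linarith)

end Weak
section Aux2

lemma lsc_lintegral_le_liminf {Ω : Type*} [MeasurableSpace Ω] [TopologicalSpace Ω]
    [OpensMeasurableSpace Ω] {μ : Measure Ω} {μs : ℕ → Measure Ω} {f : Ω → ℝ}
    (f_lsc : LowerSemicontinuous f) (f_nn : 0 ≤ f)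
    (h_opens : ∀ G, IsOpen G → μ G ≤ atTop.liminf (fun i => μs i G)) :
    ∫⁻ x, ENNReal.ofReal (f x) ∂μ
      ≤ atTop.liminf (fun i => ∫⁻ x, ENNReal.ofReal (f x) ∂(μs i)) := by
  simp_rw [lintegral_eq_lintegral_meas_lt _ (Filter.Eventually.of_forall f_nn)
    f_lsc.measurable.aemeasurable]
  calc ∫⁻ (t : ℝ) in Set.Ioi 0, μ {a | t < f a}
      ≤ ∫⁻ (t : ℝ) in Set.Ioi 0, atTop.liminf (fun i => (μs i) {a | t < f a}) :=
        lintegral_mono fun t => h_opens _ (lowerSemicontinuous_iff_isOpen_preimage.mp f_lsc t)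
    _ ≤ atTop.liminf fun i => ∫⁻ (t : ℝ) in Set.Ioi 0, (μs i) {a | t < f a} :=
        lintegral_liminf_le fun n => Antitone.measurable fun s t hst =>
          measure_mono fun ω hω => lt_of_le_of_lt hst hω

lemma pow_le_descFactorial_add (m N : ℕ) :
    N ^ m ≤ N.descFactorial m + m ^ 2 * N ^ (m - 1) := by
  induction m with
  | zero => simp
  | succ m ih =>
    rcases Nat.eq_zero_or_pos m with rfl | hm
    · simp [Nat.descFactorial_succ]
    · have hNm : N * N ^ (m - 1) = N ^ m := by
        rw [← pow_succ', Nat.sub_add_cancel hm]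
      have h1 : N * N.descFactorial m ≤ N.descFactorial (m + 1) + m * N.descFactorial m := by
        calc N * N.descFactorial m
            ≤ N * N.descFactorial m - m * N.descFactorial m + m * N.descFactorial m :=
              le_tsub_add
          _ = (N - m) * N.descFactorial m + m * N.descFactorial m := by rw [Nat.sub_mul]
          _ = N.descFactorial (m + 1) + m * N.descFactorial m := by
              rw [Nat.descFactorial_succ]
      have h2 : m * N.descFactorial m ≤ m * N ^ m :=
        Nat.mul_le_mul_left _ (Nat.descFactorial_le_pow N m)
      calc N ^ (m + 1) = N * N ^ m := by ring
        _ ≤ N * (N.descFactorial m + m ^ 2 * N ^ (m - 1)) := Nat.mul_le_mul_left _ ih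
        _ = N * N.descFactorial m + m ^ 2 * (N * N ^ (m - 1)) := by ring
        _ = N * N.descFactorial m + m ^ 2 * N ^ m := by rw [hNm]
        _ ≤ (N.descFactorial (m + 1) + m * N.descFactorial m) + m ^ 2 * N ^ m :=
            Nat.add_le_add_right h1 _
        _ ≤ N.descFactorial (m + 1) + (m + 1) ^ 2 * N ^ (m + 1 - 1) := by
            simp only [Nat.add_sub_cancel]
            have : m * N.descFactorial m + m ^ 2 * N ^ m ≤ (m + 1) ^ 2 * N ^ m := by
              nlinarith [Nat.zero_le (N ^ m), h2]
            omega

lemma card_filter_injective (m N : ℕ) :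
    (Finset.univ.filter (fun I : Fin m → Fin N => Function.Injective I)).card
      = N.descFactorial m := by
  classical
  rw [← Fintype.card_subtype,
    Fintype.card_congr (Equiv.subtypeInjectiveEquivEmbedding (Fin m) (Fin N)),
    Fintype.card_embedding_eq]
  simp

end Aux2

end Stmt15Aux

/-- Lower (liminf) bound in the Gamma-convergence of mean-field energies: for a lower
semi-continuous symmetric interaction `W : X^m → [0,∞]` and configurations `x^{(N)}`
whose empirical measures converge weakly to `μ`, the renormalized mean-field energies
`H^{(N)}(x^{(N)})/N = N^{-m} Σ_{I injective} W(x_{I})` satisfy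
`liminf H^{(N)}/N ≥ ∫ W dμ^{⊗m}`. -/
theorem stmt15 {X : Type*} [MetricSpace X] [CompactSpace X] [MeasurableSpace X] [BorelSpace X]
    (m : ℕ) (hm : 1 ≤ m)
    (W : (Fin m → X) → ℝ≥0∞) (hWlsc : LowerSemicontinuous W)
    (hWsym : ∀ (σ : Equiv.Perm (Fin m)) (y : Fin m → X), W (y ∘ σ) = W y)
    (μ : Measure X) [IsProbabilityMeasure μ]
    (xN : (N : ℕ) → Fin N → X)
    (hconv : ∀ g : C(X, ℝ),
      Tendsto (fun N : ℕ => (1 / (N : ℝ)) * ∑ i : Fin N, g (xN N i)) atTop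
        (nhds (∫ a, g a ∂μ))) :
    ∫⁻ y, W y ∂(Measure.pi (fun _ : Fin m => μ))
      ≤ atTop.liminf (fun N : ℕ =>
          ((N : ℝ≥0∞) ^ m)⁻¹ *
            ∑ I : Fin m → Fin N,
              if Function.Injective I then W (fun k => xN N (I k)) else 0) := by
  classical
  set ν : ℕ → Measure X := fun N => Stmt15Aux.emp (xN N) with hν
  set π : ℕ → Measure (Fin m → X) := fun N => Measure.pi (fun _ : Fin m => ν N) with hπ
  set πμ : Measure (Fin m → X) := Measure.pi (fun _ : Fin m => μ) with hπμ
  set S : ℕ → ℝ≥0∞ := fun N => ((N : ℝ≥0∞) ^ m)⁻¹ *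
      ∑ I : Fin m → Fin N, if Function.Injective I then W (fun k => xN N (I k)) else 0 with hSdef
  -- integral computation for empirical measures
  have hint : ∀ (g : C(X, ℝ)) (N : ℕ), ∫ a, g a ∂ν N = (1 / (N : ℝ)) * ∑ i, g (xN N i) := by
    intro g N
    rw [hν]
    rw [Stmt15Aux.integral_emp _ g.continuous.stronglyMeasurable, one_div]
  -- shifted empirical measures are probability measures
  haveI hprob : ∀ N : ℕ, IsProbabilityMeasure (ν (N + 1)) := fun N =>
    Stmt15Aux.emp_prob (Nat.succ_ne_zero N) _
  have hconv' : ∀ g : C(X, ℝ),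
      Tendsto (fun N => ∫ a, g a ∂ν (N + 1)) atTop (nhds (∫ a, g a ∂μ)) := by
    intro g
    simp_rw [hint g]
    exact (hconv g).comp (tendsto_add_atTop_nat 1)
  -- weak convergence of product measures (as probability measures)
  set P : ℕ → ProbabilityMeasure (Fin m → X) := fun N =>
    ⟨Measure.pi (fun _ : Fin m => ν (N + 1)), inferInstance⟩ with hP
  set Pμ : ProbabilityMeasure (Fin m → X) := ⟨πμ, inferInstance⟩ with hPμ
  have hPtend : Tendsto P atTop (nhds Pμ) := by
    rw [ProbabilityMeasure.tendsto_iff_forall_integral_tendsto]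
    intro f
    exact Stmt15Aux.tendsto_integral_pi m μ (fun N => ν (N + 1)) hconv' f
  -- the open-sets liminf condition for the product measures
  have h_opens : ∀ G, IsOpen G → πμ G ≤ atTop.liminf (fun N => π N G) := by
    intro G hG
    have h1 : πμ G ≤ atTop.liminf (fun N => π (N + 1) G) :=
      ProbabilityMeasure.le_liminf_measure_open_of_tendsto hPtend hG
    rwa [liminf_nat_add (fun N => π N G) 1] at h1
  -- measurability
  have hWmeas : Measurable W := hWlsc.measurable
  -- the truncations
  set Wtr : ℕ → (Fin m → X) → ℝ≥0∞ := fun n y => min (W y) n with hWtr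
  have hWtr_meas : ∀ n, Measurable (Wtr n) := fun n => hWmeas.min measurable_const
  have hWtr_ne_top : ∀ n y, Wtr n y ≠ ⊤ := fun n y =>
    ne_top_of_le_ne_top (ENNReal.natCast_ne_top n) (min_le_right _ _)
  -- each truncation satisfies the liminf bound via the portmanteau-type lemma
  have hlim : ∀ n : ℕ, ∫⁻ y, Wtr n y ∂πμ ≤ atTop.liminf (fun N => ∫⁻ y, Wtr n y ∂π N) := by
    intro n
    set g : ℝ≥0∞ → ℝ := fun a => (min a n).toReal with hg
    have hgc : Continuous g := by
      rw [continuous_iff_continuousAt]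
      intro a
      have h1 : Continuous (fun a : ℝ≥0∞ => min a (n : ℝ≥0∞)) :=
        continuous_id.min continuous_const
      exact (ENNReal.tendsto_toReal
        (ne_top_of_le_ne_top (ENNReal.natCast_ne_top n) (min_le_right _ _))).comp
          h1.continuousAt
    have hgm : Monotone g := fun a b hab =>
      ENNReal.toReal_mono (ne_top_of_le_ne_top (ENNReal.natCast_ne_top n) (min_le_right _ _))
        (min_le_min hab le_rfl)
    have hVlsc : LowerSemicontinuous (fun y => (Wtr n y).toReal) :=
      hgc.comp_lowerSemicontinuous hWlsc hgm
    have hVnn : 0 ≤ fun y => (Wtr n y).toReal := fun y => ENNReal.toReal_nonneg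
    have key := Stmt15Aux.lsc_lintegral_le_liminf hVlsc hVnn h_opens
    simp_rw [fun y => ENNReal.ofReal_toReal (hWtr_ne_top n y)] at key
    exact key
  -- the truncated lintegrals against the empirical product measures
  have hcomp : ∀ (n N : ℕ), N ≠ 0 → ∫⁻ y, Wtr n y ∂π N
      ≤ S N + ((N : ℝ≥0∞) ^ m)⁻¹ * (((N ^ m - N.descFactorial m : ℕ) : ℝ≥0∞) * n) := by
    intro n N hN
    rw [hπ, hν, Stmt15Aux.lintegral_pi_emp hN _ (hWtr_meas n)]
    have hpt : ∀ I : Fin m → Fin N, Wtr n (fun k => xN N (I k))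
        ≤ (if Function.Injective I then W (fun k => xN N (I k)) else 0)
          + (if Function.Injective I then 0 else (n : ℝ≥0∞)) := by
      intro I
      by_cases h : Function.Injective I
      · simp only [h, if_true, add_zero]
        exact min_le_left _ _
      · simp only [h, if_false, zero_add]
        exact min_le_right _ _
    have hsum : ∑ I : Fin m → Fin N, Wtr n (fun k => xN N (I k))
        ≤ (∑ I : Fin m → Fin N, if Function.Injective I then W (fun k => xN N (I k)) else 0)
          + ((N ^ m - N.descFactorial m : ℕ) : ℝ≥0∞) * n := by
      calc ∑ I : Fin m → Fin N, Wtr n (fun k => xN N (I k))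
          ≤ ∑ I : Fin m → Fin N,
            ((if Function.Injective I then W (fun k => xN N (I k)) else 0)
              + (if Function.Injective I then 0 else (n : ℝ≥0∞))) :=
            Finset.sum_le_sum fun I _ => hpt I
        _ = (∑ I : Fin m → Fin N, if Function.Injective I then W (fun k => xN N (I k)) else 0)
              + ∑ I : Fin m → Fin N, (if Function.Injective I then 0 else (n : ℝ≥0∞)) :=
            Finset.sum_add_distrib
        _ = (∑ I : Fin m → Fin N, if Function.Injective I then W (fun k => xN N (I k)) else 0)
              + ((N ^ m - N.descFactorial m : ℕ) : ℝ≥0∞) * n := by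
            congr 1
            rw [Finset.sum_ite]
            simp only [Finset.sum_const_zero, Finset.sum_const, zero_add, nsmul_eq_mul]
            have hcard : (Finset.univ.filter
                (fun I : Fin m → Fin N => ¬ Function.Injective I)).card
                = N ^ m - N.descFactorial m := by
              have h1 := Finset.card_filter_add_card_filter_not
                (s := (Finset.univ : Finset (Fin m → Fin N)))
                (fun I : Fin m → Fin N => Function.Injective I)
              rw [Stmt15Aux.card_filter_injective m N] at h1
              have h2 : (Finset.univ : Finset (Fin m → Fin N)).card = N ^ m := by
                simp [Finset.card_univ, Fintype.card_fun]
              omega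
            rw [hcard]
    calc ((N : ℝ≥0∞) ^ m)⁻¹ * ∑ I : Fin m → Fin N, Wtr n (fun k => xN N (I k))
        ≤ ((N : ℝ≥0∞) ^ m)⁻¹ *
          ((∑ I : Fin m → Fin N, if Function.Injective I then W (fun k => xN N (I k)) else 0)
            + ((N ^ m - N.descFactorial m : ℕ) : ℝ≥0∞) * n) :=
          mul_le_mul_right hsum _
      _ = S N + ((N : ℝ≥0∞) ^ m)⁻¹ * (((N ^ m - N.descFactorial m : ℕ) : ℝ≥0∞) * n) := by
          rw [mul_add, hSdef]
  -- bound the error term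
  have herr : ∀ (n N : ℕ), N ≠ 0 →
      ((N : ℝ≥0∞) ^ m)⁻¹ * (((N ^ m - N.descFactorial m : ℕ) : ℝ≥0∞) * n)
        ≤ ((m ^ 2 * n : ℕ) : ℝ≥0∞) * (N : ℝ≥0∞)⁻¹ := by
    intro n N hN
    have hN0 : (N : ℝ≥0∞) ≠ 0 := Nat.cast_ne_zero.mpr hN
    have hNt : (N : ℝ≥0∞) ≠ ⊤ := ENNReal.natCast_ne_top N
    have hsub : ((N ^ m - N.descFactorial m : ℕ) : ℝ≥0∞)
        ≤ ((m ^ 2 * N ^ (m - 1) : ℕ) : ℝ≥0∞) := by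
      rw [Nat.cast_le]
      have := Stmt15Aux.pow_le_descFactorial_add m N
      omega
    have hpow : (N : ℝ≥0∞) ^ (m - 1) * ((N : ℝ≥0∞) ^ m)⁻¹ = (N : ℝ≥0∞)⁻¹ := by
      have hm' : (N : ℝ≥0∞) ^ m = (N : ℝ≥0∞) ^ (m - 1) * (N : ℝ≥0∞) := by
        rw [← pow_succ, Nat.sub_add_cancel hm]
      rw [hm',
        ENNReal.mul_inv (Or.inr hNt) (Or.inl (ENNReal.pow_ne_top hNt)),
        ← mul_assoc, ENNReal.mul_inv_cancel (pow_ne_zero _ hN0) (ENNReal.pow_ne_top hNt),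
        one_mul]
    calc ((N : ℝ≥0∞) ^ m)⁻¹ * (((N ^ m - N.descFactorial m : ℕ) : ℝ≥0∞) * n)
        ≤ ((N : ℝ≥0∞) ^ m)⁻¹ * (((m ^ 2 * N ^ (m - 1) : ℕ) : ℝ≥0∞) * n) :=
          mul_le_mul_right (mul_le_mul_left hsub _) _
      _ = ((m ^ 2 * n : ℕ) : ℝ≥0∞) * ((N : ℝ≥0∞) ^ (m - 1) * ((N : ℝ≥0∞) ^ m)⁻¹) := by
          push_cast
          ring
      _ = ((m ^ 2 * n : ℕ) : ℝ≥0∞) * (N : ℝ≥0∞)⁻¹ := by rw [hpow]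
  -- for every truncation level and every ε > 0 the bound holds up to ε
  have hmain : ∀ n : ℕ, ∫⁻ y, Wtr n y ∂πμ ≤ atTop.liminf S := by
    intro n
    refine ENNReal.le_of_forall_pos_le_add fun ε hε _ => ?_
    have hsmall : ∀ᶠ N : ℕ in atTop,
        ((m ^ 2 * n : ℕ) : ℝ≥0∞) * (N : ℝ≥0∞)⁻¹ < (ε : ℝ≥0∞) := by
      have ht : Tendsto (fun N : ℕ => ((m ^ 2 * n : ℕ) : ℝ≥0∞) * (N : ℝ≥0∞)⁻¹) atTop
          (nhds 0) := by
        have := ENNReal.Tendsto.const_mul (a := ((m ^ 2 * n : ℕ) : ℝ≥0∞))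
          ENNReal.tendsto_inv_nat_nhds_zero (Or.inr (ENNReal.natCast_ne_top _))
        simpa using this
      exact ht.eventually_lt_const (by exact_mod_cast hε)
    have hev : ∀ᶠ N : ℕ in atTop, ∫⁻ y, Wtr n y ∂π N ≤ S N + (ε : ℝ≥0∞) := by
      filter_upwards [hsmall, eventually_ge_atTop 1] with N h1 h2
      have hN : N ≠ 0 := Nat.one_le_iff_ne_zero.mp h2
      calc ∫⁻ y, Wtr n y ∂π N
          ≤ S N + ((N : ℝ≥0∞) ^ m)⁻¹ * (((N ^ m - N.descFactorial m : ℕ) : ℝ≥0∞) * n) :=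
            hcomp n N hN
        _ ≤ S N + (ε : ℝ≥0∞) := add_le_add_right ((herr n N hN).trans h1.le) _
    calc ∫⁻ y, Wtr n y ∂πμ
        ≤ atTop.liminf (fun N => ∫⁻ y, Wtr n y ∂π N) := hlim n
      _ ≤ atTop.liminf (fun N => S N + (ε : ℝ≥0∞)) :=
          liminf_le_liminf hev
      _ = atTop.liminf S + (ε : ℝ≥0∞) :=
          liminf_add_const atTop S (ε : ℝ≥0∞) isCobounded_ge_of_top isBounded_ge_of_bot
  -- monotone convergence to conclude
  have hW_eq : ∀ y, W y = ⨆ n : ℕ, Wtr n y := by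
    intro y
    refine le_antisymm ?_ (iSup_le fun n => min_le_left _ _)
    rcases eq_or_ne (W y) ⊤ with h | h
    · rw [h]
      have : ∀ n : ℕ, (n : ℝ≥0∞) ≤ ⨆ n : ℕ, Wtr n y := by
        intro n
        refine le_trans ?_ (le_iSup _ n)
        rw [hWtr]
        simp [h]
      calc (⊤ : ℝ≥0∞) = ⨆ n : ℕ, (n : ℝ≥0∞) := ENNReal.iSup_natCast.symm
        _ ≤ ⨆ n : ℕ, Wtr n y := iSup_le this
    · obtain ⟨n, hn⟩ := ENNReal.exists_nat_gt h
      refine le_trans ?_ (le_iSup _ n)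
      rw [hWtr]
      simp only [min_eq_left hn.le, le_refl]
  have hMCT : ∫⁻ y, W y ∂πμ = ⨆ n : ℕ, ∫⁻ y, Wtr n y ∂πμ := by
    rw [← lintegral_iSup hWtr_meas]
    · exact lintegral_congr hW_eq
    · intro a b hab y
      exact min_le_min le_rfl (by exact_mod_cast Nat.cast_le.mpr hab)
  rw [hπμ] at hMCT
  rw [hMCT]
  exact iSup_le hmain
end
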